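/- Let p:[0,1]→[0,1] be continuous and q = 1−p. Let φ:(0,1)→ℝ be continuous, with ∫₀^x q(t)/(1−t) |φ(t)| dt < ∞ and ∫_x^1 p(t)/t |φ(t)| dt < ∞ for every x ∈ (0,1), and suppose φ(x) = ∫₀^x (q(t)/(1−t)) φ(t) dt + ∫_x^1 (p(t)/t) φ(t) dt for all x ∈ (0,1). Then φ is differentiable on (0,1) and φ'(x) = (q(x)/(1−x) − p(x)/x) φ(x) for all x ∈ (0,1); consequently φ(x) = φ(1/2) · exp(∫_x^{1/2} p(t)/t dt + ∫_{1/2}^x q(t)/(1−t) dt) on (0,1). -/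

import Mathlib

open MeasureTheory Filter Set
open Topology

/-- if `p : [0,1] → [0,1]` is continuous, `φ` is continuous on `(0,1)` with
the appropriate integrability, and
`φ(x) = ∫₀^x (q(t)/(1−t))φ(t) dt + ∫_x^1 (p(t)/t)φ(t) dt` on `(0,1)`, then `φ` is
differentiable there with `φ'(x) = (q(x)/(1−x) − p(x)/x)φ(x)`, and consequently
`φ(x) = φ(1/2)·exp(∫_x^{1/2} p(t)/t dt + ∫_{1/2}^x q(t)/(1−t) dt)` on `(0,1)`. -/
theorem stmt12 (p : ℝ → ℝ) (hpcont : ContinuousOn p (Set.Icc (0 : ℝ) 1))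
    (hp01 : ∀ x ∈ Set.Icc (0 : ℝ) 1, p x ∈ Set.Icc (0 : ℝ) 1)
    (φ : ℝ → ℝ) (hφcont : ContinuousOn φ (Set.Ioo (0 : ℝ) 1))
    (hint1 : ∀ x ∈ Set.Ioo (0 : ℝ) 1,
      IntegrableOn (fun t => (1 - p t) / (1 - t) * |φ t|) (Set.Ioo (0 : ℝ) x))
    (hint2 : ∀ x ∈ Set.Ioo (0 : ℝ) 1,
      IntegrableOn (fun t => p t / t * |φ t|) (Set.Ioo x (1 : ℝ)))
    (heq : ∀ x ∈ Set.Ioo (0 : ℝ) 1,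
      φ x = (∫ t in Set.Ioo (0 : ℝ) x, (1 - p t) / (1 - t) * φ t) +
        ∫ t in Set.Ioo x (1 : ℝ), p t / t * φ t) :
    (∀ x ∈ Set.Ioo (0 : ℝ) 1,
      HasDerivAt φ (((1 - p x) / (1 - x) - p x / x) * φ x) x) ∧
    ∀ x ∈ Set.Ioo (0 : ℝ) 1,
      φ x = φ (1 / 2) *
        Real.exp ((∫ t in x..(1 / 2 : ℝ), p t / t) +
          ∫ t in (1 / 2 : ℝ)..x, (1 - p t) / (1 - t)) := by
  set f : ℝ → ℝ := fun t => (1 - p t) / (1 - t) * φ t with hf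
  set g : ℝ → ℝ := fun t => p t / t * φ t with hg
  have hsub : Set.Ioo (0:ℝ) 1 ⊆ Set.Icc (0:ℝ) 1 := Set.Ioo_subset_Icc_self
  have hpc : ContinuousOn p (Set.Ioo (0:ℝ) 1) := hpcont.mono hsub
  have hfc : ContinuousOn f (Set.Ioo (0:ℝ) 1) := by
    apply ContinuousOn.mul _ hφcont
    exact ((continuousOn_const.sub hpc).div (continuousOn_const.sub continuousOn_id))
      (fun t ht => by intro h; have h' : (1:ℝ) - t = 0 := h; linarith [ht.2, sub_eq_zero.mp h'])
  have hgc : ContinuousOn g (Set.Ioo (0:ℝ) 1) := by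
    apply ContinuousOn.mul _ hφcont
    exact (hpc.div continuousOn_id) (fun t ht => by simp only [id]; exact ne_of_gt ht.1)
  have hfi : ∀ y ∈ Set.Ioo (0:ℝ) 1, IntegrableOn f (Set.Ioo (0:ℝ) y) := by
    intro y hy
    refine Integrable.mono (hint1 y hy)
      ((hfc.mono (fun t ht => ⟨ht.1, ht.2.trans hy.2⟩)).aestronglyMeasurable
        measurableSet_Ioo) ?_
    filter_upwards with t
    simp only [hf, Real.norm_eq_abs, abs_mul, abs_abs]
    exact le_refl _
  have hgi : ∀ y ∈ Set.Ioo (0:ℝ) 1, IntegrableOn g (Set.Ioo y (1:ℝ)) := by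
    intro y hy
    refine Integrable.mono (hint2 y hy)
      ((hgc.mono (fun t ht => ⟨hy.1.trans ht.1, ht.2⟩)).aestronglyMeasurable
        measurableSet_Ioo) ?_
    filter_upwards with t
    simp only [hg, Real.norm_eq_abs, abs_mul, abs_abs]
    exact le_refl _
  have key : ∀ x ∈ Set.Ioo (0:ℝ) 1,
      HasDerivAt φ (((1 - p x) / (1 - x) - p x / x) * φ x) x := by
    intro x hx
    obtain ⟨hx0, hx1⟩ := hx
    set a : ℝ := x / 2 with ha
    set b : ℝ := (x + 1) / 2 with hb
    have ha0 : 0 < a := by positivity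
    have hax : a < x := by simp only [ha]; linarith
    have hxb : x < b := by simp only [hb]; linarith
    have hb1 : b < 1 := by simp only [hb]; linarith
    have haI : a ∈ Set.Ioo (0:ℝ) 1 := ⟨ha0, by linarith⟩
    have hbI : b ∈ Set.Ioo (0:ℝ) 1 := ⟨by linarith, hb1⟩
    have hIccsub : Set.Icc a b ⊆ Set.Ioo (0:ℝ) 1 :=
      fun t ht => ⟨lt_of_lt_of_le ha0 ht.1, lt_of_le_of_lt ht.2 hb1⟩
    have hfIcc : IntegrableOn f (Set.Icc a b) :=
      (hfc.mono hIccsub).integrableOn_compact isCompact_Icc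
    have hgIcc : IntegrableOn g (Set.Icc a b) :=
      (hgc.mono hIccsub).integrableOn_compact isCompact_Icc
    set A : ℝ := ∫ t in Set.Ioo (0:ℝ) a, f t with hA
    set B : ℝ := ∫ t in Set.Ioo b (1:ℝ), g t with hB
    set C : ℝ := ∫ t in a..b, g t with hC
    have hkey : ∀ y ∈ Set.Ioo a b,
        φ y = (A + B + C) + ∫ t in a..y, (f t - g t) := by
      intro y hy
      have hay : a ≤ y := le_of_lt hy.1
      have hyb : y ≤ b := le_of_lt hy.2
      have hyI : y ∈ Set.Ioo (0:ℝ) 1 := ⟨lt_trans ha0 hy.1, lt_trans hy.2 hb1⟩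
      have hfIab : IntervalIntegrable f volume a y :=
        (intervalIntegrable_iff_integrableOn_Icc_of_le hay).mpr
          (hfIcc.mono_set (Set.Icc_subset_Icc le_rfl hyb))
      have hgIab : IntervalIntegrable g volume a y :=
        (intervalIntegrable_iff_integrableOn_Icc_of_le hay).mpr
          (hgIcc.mono_set (Set.Icc_subset_Icc le_rfl hyb))
      have hgIyb : IntervalIntegrable g volume y b :=
        (intervalIntegrable_iff_integrableOn_Icc_of_le hyb).mpr
          (hgIcc.mono_set (Set.Icc_subset_Icc hay le_rfl))
      have h1 : (∫ t in Set.Ioo (0:ℝ) y, f t) = A + ∫ t in a..y, f t := by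
        have hu : Set.Ioo (0:ℝ) a ∪ Set.Ico a y = Set.Ioo (0:ℝ) y :=
          Set.Ioo_union_Ico_eq_Ioo ha0 hay
        have hdisj : Disjoint (Set.Ioo (0:ℝ) a) (Set.Ico a y) :=
          Set.disjoint_left.mpr fun t ht ht' => absurd ht'.1 (not_le.mpr ht.2)
        rw [← hu, setIntegral_union hdisj measurableSet_Ico (hfi a haI)
          (hfIcc.mono_set (fun t ht => ⟨ht.1, ht.2.le.trans hyb⟩)),
          integral_Ico_eq_integral_Ioo, intervalIntegral.integral_of_le hay,
          MeasureTheory.integral_Ioc_eq_integral_Ioo]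
      have h2 : (∫ t in Set.Ioo y (1:ℝ), g t) = (C - ∫ t in a..y, g t) + B := by
        have hu : Set.Ioc y b ∪ Set.Ioo b (1:ℝ) = Set.Ioo y 1 :=
          Set.Ioc_union_Ioo_eq_Ioo hyb hb1
        have hdisj : Disjoint (Set.Ioc y b) (Set.Ioo b (1:ℝ)) :=
          Set.disjoint_left.mpr fun t ht ht' => absurd ht.2 (not_le.mpr ht'.1)
        have hadd : (∫ t in a..y, g t) + ∫ t in y..b, g t = C :=
          intervalIntegral.integral_add_adjacent_intervals hgIab hgIyb
        rw [← hu, setIntegral_union hdisj measurableSet_Ioo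
          (hgIcc.mono_set (fun t ht => ⟨hay.trans ht.1.le, ht.2⟩)) (hgi b hbI),
          ← intervalIntegral.integral_of_le hyb]
        rw [← hadd]; ring
      rw [heq y hyI, h1, h2, intervalIntegral.integral_sub hfIab hgIab]
      ring
    have hmemnhds : Set.Ioo a b ∈ 𝓝 x := Ioo_mem_nhds hax hxb
    have hxI : x ∈ Set.Ioo (0:ℝ) 1 := ⟨hx0, hx1⟩
    have hcsub : ContinuousOn (fun t => f t - g t) (Set.Ioo (0:ℝ) 1) := hfc.sub hgc
    have hfgIcc : IntegrableOn (fun t => f t - g t) (Set.Icc a b) := hfIcc.sub hgIcc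
    have hint : IntervalIntegrable (fun t => f t - g t) volume a x :=
      (intervalIntegrable_iff_integrableOn_Icc_of_le hax.le).mpr
        (hfgIcc.mono_set (Set.Icc_subset_Icc le_rfl hxb.le))
    have hD : HasDerivAt (fun y => (A + B + C) + ∫ t in a..y, (f t - g t))
        (f x - g x) x := by
      exact (intervalIntegral.integral_hasDerivAt_right hint
        (hcsub.stronglyMeasurableAtFilter isOpen_Ioo x hxI)
        (hcsub.continuousAt (isOpen_Ioo.mem_nhds hxI))).const_add _
    have hEq : φ =ᶠ[𝓝 x] fun y => (A + B + C) + ∫ t in a..y, (f t - g t) :=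
      Filter.eventuallyEq_of_mem hmemnhds (fun y hy => hkey y hy)
    have := hD.congr_of_eventuallyEq hEq
    exact this.congr_deriv (by simp only [hf, hg]; ring)
  refine ⟨key, ?_⟩
  -- second part
  set h : ℝ → ℝ := fun t => (1 - p t) / (1 - t) - p t / t with hh
  have hhc : ContinuousOn h (Set.Ioo (0:ℝ) 1) := by
    apply ContinuousOn.sub
    · exact ((continuousOn_const.sub hpc).div (continuousOn_const.sub continuousOn_id))
        (fun t ht => by intro h; have h' : (1:ℝ) - t = 0 := h; linarith [ht.2, sub_eq_zero.mp h'])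
    · exact (hpc.div continuousOn_id) (fun t ht => by simp only [id]; exact ne_of_gt ht.1)
  have huIccsub : ∀ x ∈ Set.Ioo (0:ℝ) 1, Set.uIcc (1/2:ℝ) x ⊆ Set.Ioo (0:ℝ) 1 := by
    intro x hx t ht
    rcases le_total (1/2:ℝ) x with hle | hle
    · rw [Set.uIcc_of_le hle] at ht
      exact ⟨by linarith [ht.1], lt_of_le_of_lt ht.2 hx.2⟩
    · rw [Set.uIcc_of_ge hle] at ht
      exact ⟨lt_of_lt_of_le hx.1 ht.1, lt_of_le_of_lt ht.2 (by norm_num)⟩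
  have hhint : ∀ x ∈ Set.Ioo (0:ℝ) 1, IntervalIntegrable h volume (1/2) x :=
    fun x hx => (hhc.mono (huIccsub x hx)).intervalIntegrable
  set H : ℝ → ℝ := fun x => ∫ t in (1/2:ℝ)..x, h t with hH
  have hHd : ∀ x ∈ Set.Ioo (0:ℝ) 1, HasDerivAt H (h x) x := by
    intro x hx
    exact intervalIntegral.integral_hasDerivAt_right (hhint x hx)
      (hhc.stronglyMeasurableAtFilter isOpen_Ioo x hx)
      (hhc.continuousAt (isOpen_Ioo.mem_nhds hx))
  set ψ : ℝ → ℝ := fun x => φ x * Real.exp (-H x) with hψ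
  have hψd : ∀ x ∈ Set.Ioo (0:ℝ) 1, HasDerivAt ψ 0 x := by
    intro x hx
    have h1 := (key x hx).mul (((hHd x hx).neg).exp)
    exact h1.congr_deriv (by simp only [hh]; ring)
  have hhalf : (1/2:ℝ) ∈ Set.Ioo (0:ℝ) 1 := by norm_num
  have hconst : ∀ x ∈ Set.Ioo (0:ℝ) 1, ψ x = ψ (1/2) := by
    intro x hx
    rcases le_total x (1/2) with hle | hle
    · have hIcc : Set.Icc x (1/2:ℝ) ⊆ Set.Ioo (0:ℝ) 1 :=
        fun t ht => ⟨lt_of_lt_of_le hx.1 ht.1, lt_of_le_of_lt ht.2 (by norm_num)⟩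
      have := constant_of_has_deriv_right_zero
        (f := ψ) (a := x) (b := 1/2)
        (fun t ht => ((hψd t (hIcc ht)).continuousAt).continuousWithinAt)
        (fun t ht => ((hψd t (hIcc (Set.Ico_subset_Icc_self ht))).hasDerivWithinAt))
        (1/2) (Set.right_mem_Icc.mpr hle)
      exact this.symm
    · have hIcc : Set.Icc (1/2:ℝ) x ⊆ Set.Ioo (0:ℝ) 1 :=
        fun t ht => ⟨lt_of_lt_of_le (by norm_num) ht.1, lt_of_le_of_lt ht.2 hx.2⟩
      exact constant_of_has_deriv_right_zero
        (f := ψ) (a := 1/2) (b := x)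
        (fun t ht => ((hψd t (hIcc ht)).continuousAt).continuousWithinAt)
        (fun t ht => ((hψd t (hIcc (Set.Ico_subset_Icc_self ht))).hasDerivWithinAt))
        x (Set.right_mem_Icc.mpr hle)
  intro x hx
  have hψx := hconst x hx
  have hH0 : H (1/2) = 0 := intervalIntegral.integral_same
  have hψhalf : ψ (1/2) = φ (1/2) := by
    simp only [hψ, hH0, neg_zero, Real.exp_zero, mul_one]
  have hφx : φ x = φ (1/2) * Real.exp (H x) := by
    have := hψx
    rw [hψhalf] at this
    simp only [hψ] at this
    have hne : Real.exp (-H x) ≠ 0 := Real.exp_ne_zero _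
    field_simp [Real.exp_neg] at this ⊢
    rw [← this, mul_assoc, ← Real.exp_add, neg_add_cancel, Real.exp_zero, mul_one]
  rw [hφx]
  congr 1
  -- H x = ∫_x^{1/2} p/t + ∫_{1/2}^x (1-p)/(1-t)
  have hi1 : IntervalIntegrable (fun t => (1 - p t) / (1 - t)) volume (1/2) x := by
    apply ContinuousOn.intervalIntegrable
    apply ContinuousOn.mono _ (huIccsub x hx)
    exact ((continuousOn_const.sub hpc).div (continuousOn_const.sub continuousOn_id))
      (fun t ht => by intro h; have h' : (1:ℝ) - t = 0 := h; linarith [ht.2, sub_eq_zero.mp h'])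
  have hi2 : IntervalIntegrable (fun t => p t / t) volume (1/2) x := by
    apply ContinuousOn.intervalIntegrable
    apply ContinuousOn.mono _ (huIccsub x hx)
    exact (hpc.div continuousOn_id) (fun t ht => by simp only [id]; exact ne_of_gt ht.1)
  have : H x = (∫ t in (1/2:ℝ)..x, (1 - p t) / (1 - t)) - ∫ t in (1/2:ℝ)..x, p t / t := by
    simp only [hH, hh]
    exact intervalIntegral.integral_sub hi1 hi2
  rw [this, intervalIntegral.integral_symm (1/2) x]
  congr 1
  ring
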